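/- arXiv:2406.00925 — 8 statements merged into one kernel-verified Lean document; each statement's English description precedes it below -/
import Mathlib

section
/- For smooth functions f, h : ℝ² → ℝ in variables (q,p), let {f,h} = (∂f/∂q)(∂h/∂p) - (∂f/∂p)(∂h/∂q). Define F(q,p) = cosh(p/2)/sinh(q) and G(q,p) = cosh((p-2q)/2)/cosh((p+2q)/2). Then for every (q,p) ∈ ℝ² with q ≠ 0, {F,G}(q,p) = F(q,p)·G(q,p). -/
open Real

/-- The substitution `e^q → cosh(p/2)/sinh(q)`, `e^p → cosh((p-2q)/2)/cosh((p+2q)/2)`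
is canonical: the images `F`, `G` satisfy `{F,G} = F·G` (for `q ≠ 0`), where
`{f,h} = ∂_q f · ∂_p h - ∂_p f · ∂_q h` is the canonical Poisson bracket. -/
theorem canonical_change_of_variables_typeD
    (F G : ℝ → ℝ → ℝ)
    (hF : F = fun q p => Real.cosh (p / 2) / Real.sinh q)
    (hG : G = fun q p => Real.cosh ((p - 2 * q) / 2) / Real.cosh ((p + 2 * q) / 2)) :
    ∀ q p : ℝ, q ≠ 0 →
      deriv (fun q' => F q' p) q * deriv (fun p' => G q p') p
        - deriv (fun p' => F q p') p * deriv (fun q' => G q' p) q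
      = F q p * G q p := by
  subst hF hG
  intro q p hq
  simp only
  have hs : Real.sinh q ≠ 0 := Real.sinh_ne_zero.mpr hq
  have hb : Real.cosh ((p + 2*q)/2) ≠ 0 := (Real.cosh_pos _).ne'
  have d1 : HasDerivAt (fun q' => Real.cosh (p / 2) / Real.sinh q')
      ((0 * Real.sinh q - Real.cosh (p/2) * Real.cosh q) / (Real.sinh q)^2) q :=
    (hasDerivAt_const q (Real.cosh (p/2))).div (Real.hasDerivAt_sinh q) hs
  have dnum : HasDerivAt (fun p' => Real.cosh (p' / 2)) (Real.sinh (p/2) * (1/2)) p :=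
    ((Real.hasDerivAt_cosh (p/2)).comp p ((hasDerivAt_id p).div_const 2) :
      HasDerivAt (Real.cosh ∘ fun x => id x / 2) _ p)
  have d2 : HasDerivAt (fun p' => Real.cosh (p' / 2) / Real.sinh q)
      (Real.sinh (p/2) * (1/2) / Real.sinh q) p := dnum.div_const _
  have hap : HasDerivAt (fun p' => (p' - 2 * q) / 2) ((1 - 0)/2) p :=
    ((hasDerivAt_id p).sub (hasDerivAt_const p (2*q))).div_const 2
  have hbp : HasDerivAt (fun p' => (p' + 2 * q) / 2) ((1 + 0)/2) p :=
    ((hasDerivAt_id p).add (hasDerivAt_const p (2*q))).div_const 2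
  have haq : HasDerivAt (fun q' => (p - 2 * q') / 2) ((0 - 2*1)/2) q :=
    ((hasDerivAt_const q p).sub ((hasDerivAt_id q).const_mul 2)).div_const 2
  have hbq : HasDerivAt (fun q' => (p + 2 * q') / 2) ((0 + 2*1)/2) q :=
    ((hasDerivAt_const q p).add ((hasDerivAt_id q).const_mul 2)).div_const 2
  have d3 : HasDerivAt (fun p' => Real.cosh ((p' - 2 * q) / 2) / Real.cosh ((p' + 2 * q) / 2))
      (((Real.sinh ((p-2*q)/2) * ((1-0)/2)) * Real.cosh ((p+2*q)/2)
        - Real.cosh ((p-2*q)/2) * (Real.sinh ((p+2*q)/2) * ((1+0)/2))) / (Real.cosh ((p+2*q)/2))^2) p :=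
    (((Real.hasDerivAt_cosh _).comp p hap).div ((Real.hasDerivAt_cosh _).comp p hbp) hb)
  have d4 : HasDerivAt (fun q' => Real.cosh ((p - 2 * q') / 2) / Real.cosh ((p + 2 * q') / 2))
      (((Real.sinh ((p-2*q)/2) * ((0-2*1)/2)) * Real.cosh ((p+2*q)/2)
        - Real.cosh ((p-2*q)/2) * (Real.sinh ((p+2*q)/2) * ((0+2*1)/2))) / (Real.cosh ((p+2*q)/2))^2) q :=
    (((Real.hasDerivAt_cosh _).comp q haq).div ((Real.hasDerivAt_cosh _).comp q hbq) hb)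
  rw [d1.deriv, d2.deriv, d3.deriv, d4.deriv]
  have e1 : (p - 2*q)/2 = p/2 - q := by ring
  have e2 : (p + 2*q)/2 = p/2 + q := by ring
  rw [e1, e2, Real.cosh_sub, Real.cosh_add, Real.sinh_sub, Real.sinh_add]
  have h1 : Real.cosh q ^ 2 = 1 + Real.sinh q ^ 2 := by
    have := Real.cosh_sq_sub_sinh_sq q; nlinarith [this]
  have h2 : Real.cosh (p/2) ^ 2 = 1 + Real.sinh (p/2) ^ 2 := by
    have := Real.cosh_sq_sub_sinh_sq (p/2); nlinarith [this]
  have hb' : Real.cosh (p/2) * Real.cosh q + Real.sinh (p/2) * Real.sinh q ≠ 0 := by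
    rw [← Real.cosh_add]; exact (Real.cosh_pos _).ne'
  have hb'' : Real.cosh (p/2) * Real.cosh q + Real.sinh q * Real.sinh (p/2) ≠ 0 := by
    rw [mul_comm (Real.sinh q)]; exact hb'
  field_simp
  nlinarith [h1, h2, sq_nonneg (Real.sinh q), sq_nonneg (Real.sinh (p/2))]
end

section
/- For smooth functions f, h : ℝ² → ℝ in variables (q,p), let {f,h} = (∂f/∂q)(∂h/∂p) - (∂f/∂p)(∂h/∂q). Define F(q,p) = sinh(q)/cosh(p/2) and G(q,p) = cosh((p+2q)/2)/cosh((p-2q)/2). Then for every (q,p) ∈ ℝ², {F,G}(q,p) = F(q,p)·G(q,p). -/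
open Real

/-- The substitution `e^q → sinh(q)/cosh(p/2)`, `e^p → cosh((p+2q)/2)/cosh((p-2q)/2)`
is canonical: the images `F`, `G` satisfy `{F,G} = F·G` on all of ℝ², where
`{f,h} = ∂_q f · ∂_p h - ∂_p f · ∂_q h` is the canonical Poisson bracket. -/
theorem canonical_change_of_variables_typeD'
    (F G : ℝ → ℝ → ℝ)
    (hF : F = fun q p => Real.sinh q / Real.cosh (p / 2))
    (hG : G = fun q p => Real.cosh ((p + 2 * q) / 2) / Real.cosh ((p - 2 * q) / 2)) :
    ∀ q p : ℝ,
      deriv (fun q' => F q' p) q * deriv (fun p' => G q p') p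
        - deriv (fun p' => F q p') p * deriv (fun q' => G q' p) q
      = F q p * G q p := by
  subst hF hG
  intro q p
  simp only
  have hc : ∀ x : ℝ, Real.cosh x ≠ 0 := fun x => (Real.cosh_pos x).ne'
  -- derivative of F in q
  have d1 : HasDerivAt (fun q' => Real.sinh q' / Real.cosh (p / 2))
      (Real.cosh q / Real.cosh (p / 2)) q := (Real.hasDerivAt_sinh q).div_const _
  -- derivative of cosh(p'/2) in p
  have hcp : HasDerivAt (fun p' : ℝ => Real.cosh (p' / 2)) (Real.sinh (p / 2) * (1 / 2)) p :=
    by have := (Real.hasDerivAt_cosh (p / 2)).comp p ((hasDerivAt_id p).div_const 2); exact this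
  have d2 : HasDerivAt (fun p' => Real.sinh q / Real.cosh (p' / 2))
      ((0 * Real.cosh (p / 2) - Real.sinh q * (Real.sinh (p / 2) * (1 / 2))) /
        Real.cosh (p / 2) ^ 2) p :=
    (hasDerivAt_const p (Real.sinh q)).div hcp (hc _)
  -- derivative of G in p
  have hap : HasDerivAt (fun p' : ℝ => Real.cosh ((p' + 2 * q) / 2))
      (Real.sinh ((p + 2 * q) / 2) * (1 / 2)) p :=
    (Real.hasDerivAt_cosh _).comp p (((hasDerivAt_id p).add_const (2 * q)).div_const 2)
  have hbp : HasDerivAt (fun p' : ℝ => Real.cosh ((p' - 2 * q) / 2))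
      (Real.sinh ((p - 2 * q) / 2) * (1 / 2)) p :=
    (Real.hasDerivAt_cosh _).comp p (((hasDerivAt_id p).sub_const (2 * q)).div_const 2)
  have d3 : HasDerivAt (fun p' => Real.cosh ((p' + 2 * q) / 2) / Real.cosh ((p' - 2 * q) / 2))
      ((Real.sinh ((p + 2 * q) / 2) * (1 / 2) * Real.cosh ((p - 2 * q) / 2)
        - Real.cosh ((p + 2 * q) / 2) * (Real.sinh ((p - 2 * q) / 2) * (1 / 2)))
        / Real.cosh ((p - 2 * q) / 2) ^ 2) p := hap.div hbp (hc _)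
  -- derivative of G in q
  have haq : HasDerivAt (fun q' : ℝ => Real.cosh ((p + 2 * q') / 2))
      (Real.sinh ((p + 2 * q) / 2) * (2 * 1 / 2)) q :=
    (Real.hasDerivAt_cosh _).comp q ((((hasDerivAt_id q).const_mul 2).const_add p).div_const 2)
  have hbq : HasDerivAt (fun q' : ℝ => Real.cosh ((p - 2 * q') / 2))
      (Real.sinh ((p - 2 * q) / 2) * (-(2 * 1) / 2)) q :=
    (Real.hasDerivAt_cosh _).comp q ((((hasDerivAt_id q).const_mul 2).const_sub p).div_const 2)
  have d4 : HasDerivAt (fun q' => Real.cosh ((p + 2 * q') / 2) / Real.cosh ((p - 2 * q') / 2))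
      ((Real.sinh ((p + 2 * q) / 2) * (2 * 1 / 2) * Real.cosh ((p - 2 * q) / 2)
        - Real.cosh ((p + 2 * q) / 2) * (Real.sinh ((p - 2 * q) / 2) * (-(2 * 1) / 2)))
        / Real.cosh ((p - 2 * q) / 2) ^ 2) q := haq.div hbq (hc _)
  rw [d1.deriv, d2.deriv, d3.deriv, d4.deriv]
  -- algebra
  have e1 : (p + 2 * q) / 2 = p / 2 + q := by ring
  have e2 : (p - 2 * q) / 2 = p / 2 - q := by ring
  rw [e1, e2, Real.cosh_add, Real.cosh_sub, Real.sinh_add, Real.sinh_sub]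
  have h1 : Real.cosh (p / 2) ^ 2 - Real.sinh (p / 2) ^ 2 = 1 := Real.cosh_sq_sub_sinh_sq _
  have h2 : Real.cosh q ^ 2 - Real.sinh q ^ 2 = 1 := Real.cosh_sq_sub_sinh_sq _
  have hb : Real.cosh (p / 2) * Real.cosh q - Real.sinh (p / 2) * Real.sinh q ≠ 0 := by
    rw [← Real.cosh_sub]; exact hc _
  have hb' : Real.cosh q * Real.cosh (p / 2) - Real.sinh (p / 2) * Real.sinh q ≠ 0 := by
    rw [mul_comm]; exact hb
  field_simp
  nlinarith [sq_nonneg (Real.cosh (p/2)), sq_nonneg (Real.sinh q), h1, h2,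
    mul_self_nonneg (Real.cosh (p/2) * Real.sinh q)]
end

section
/- Let F be a field, A an associative unital F-algebra, and let U, V be units in A satisfying the Weyl-type relation V·U = H·(U·V) for some nonzero scalar H ∈ F. Let X, X' ∈ F be nonzero scalars and g ∈ F any scalar. Define 2×2 matrices over A: L(X) = [[X·U⁻¹ - X⁻¹·U, -g·V⁻¹],[g·V, 0]], and L(X') with X replaced by X' (same U, V, g). Define the 4×4 matrix R over A whose only nonzero entries (all scalar multiples of 1_A) are R₁₁ = R₄₄ = (X X'⁻¹ H - X⁻¹ X' H⁻¹)·1, R₂₂ = R₃₃ = (X X'⁻¹ - X⁻¹ X')·1, and R₂₃ = R₃₂ = (H - H⁻¹)·1 (rows/columns ordered (1,1),(1,2),(2,1),(2,2)). Then, with ⊗ denoting the Kronecker product of matrices and I₂ the 2×2 identity over A, the Yang–Baxter RLL relation holds: R·(L(X) ⊗ I₂)·(I₂ ⊗ L(X')) = (I₂ ⊗ L(X'))·(L(X) ⊗ I₂)·R. -/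
open Matrix Kronecker

/-- The 2×2 Lax matrix `L(X) = [[X U⁻¹ - X⁻¹ U, -g V⁻¹],[g V, 0]]` over an `F`-algebra `A`. -/
def rtlLax (F : Type*) [Field F] (A : Type*) [Ring A] [Algebra F A]
    (U V : Aˣ) (g X : F) : Matrix (Fin 2) (Fin 2) A :=
  !![algebraMap F A X * (↑U⁻¹ : A) - algebraMap F A X⁻¹ * (U : A),
      -(algebraMap F A g * (↑V⁻¹ : A));
    algebraMap F A g * (V : A), 0]

/-- The 4×4 trigonometric R-matrix with rows/columns indexed by `Fin 2 × Fin 2` in the order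
`(1,1),(1,2),(2,1),(2,2)`: diagonal entries `X X'⁻¹ H - X⁻¹ X' H⁻¹` at `(1,1),(4,4)` and
`X X'⁻¹ - X⁻¹ X'` at `(2,2),(3,3)`, off-diagonal entries `H - H⁻¹` at `(2,3),(3,2)`. -/
def rtlR (F : Type*) [Field F] (A : Type*) [Ring A] [Algebra F A]
    (X X' H : F) : Matrix (Fin 2 × Fin 2) (Fin 2 × Fin 2) A :=
  Matrix.of fun ij kl =>
    if ij = kl then
      (if ij.1 = ij.2 then algebraMap F A (X * X'⁻¹ * H - X⁻¹ * X' * H⁻¹)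
       else algebraMap F A (X * X'⁻¹ - X⁻¹ * X'))
    else if ij.1 ≠ ij.2 ∧ kl.1 ≠ kl.2 then algebraMap F A (H - H⁻¹)
    else 0

set_option maxHeartbeats 2000000 in
/-- the Yang–Baxter RLL (train-track) relation
`R · (L(X) ⊗ I₂) · (I₂ ⊗ L(X')) = (I₂ ⊗ L(X')) · (L(X) ⊗ I₂) · R`
for units `U, V` satisfying the Weyl relation `V U = H (U V)`. -/
theorem rtl_RLL_relation (F : Type*) [Field F] (A : Type*) [Ring A] [Algebra F A]
    (U V : Aˣ) (H : F) (hH : H ≠ 0)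
    (hWeyl : (V : A) * (U : A) = algebraMap F A H * ((U : A) * (V : A)))
    (X X' : F) (hX : X ≠ 0) (hX' : X' ≠ 0) (g : F) :
    rtlR F A X X' H
        * (rtlLax F A U V g X ⊗ₖ (1 : Matrix (Fin 2) (Fin 2) A))
        * ((1 : Matrix (Fin 2) (Fin 2) A) ⊗ₖ rtlLax F A U V g X')
      = ((1 : Matrix (Fin 2) (Fin 2) A) ⊗ₖ rtlLax F A U V g X')
        * (rtlLax F A U V g X ⊗ₖ (1 : Matrix (Fin 2) (Fin 2) A))
        * rtlR F A X X' H := by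

  have key1 : ∀ (u w : Aˣ) (c : F), c ≠ 0 → ((w:A) * u = c • ((u:A) * w)) →
      ((w:A) * ↑u⁻¹ = c⁻¹ • ((↑u⁻¹:A) * w)) := by
    intro u w c hc h
    have h2 : (↑u⁻¹:A) * ↑w = c • ((↑w:A) * ↑u⁻¹) := by
      have := congrArg (fun a => (↑u⁻¹:A) * a * ↑u⁻¹) h
      simpa [mul_assoc, mul_smul_comm, smul_mul_assoc, Units.mul_inv, Units.inv_mul,
        Units.mul_inv_cancel_left, Units.inv_mul_cancel_left, mul_one, one_mul] using this
    rw [h2, smul_smul, inv_mul_cancel₀ hc, one_smul]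
  have key2 : ∀ (u w : Aˣ) (c : F), c ≠ 0 → ((w:A) * u = c • ((u:A) * w)) →
      ((↑w⁻¹:A) * u = c⁻¹ • ((u:A) * ↑w⁻¹)) := by
    intro u w c hc h
    have h2 : (u:A) * ↑w⁻¹ = c • ((↑w⁻¹:A) * ↑u) := by
      have := congrArg (fun a => (↑w⁻¹:A) * a * ↑w⁻¹) h
      simpa [mul_assoc, mul_smul_comm, smul_mul_assoc, Units.mul_inv, Units.inv_mul,
        Units.mul_inv_cancel_left, Units.inv_mul_cancel_left, mul_one, one_mul] using this
    rw [h2, smul_smul, inv_mul_cancel₀ hc, one_smul]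
  have hVU : (V : A) * U = H • ((U : A) * V) := by rw [hWeyl, Algebra.smul_def]
  have hVUi := key1 U V H hH hVU
  have hViU := key2 U V H hH hVU
  have hViUi := key1 U V⁻¹ H⁻¹ (inv_ne_zero hH) hViU
  rw [inv_inv] at hViUi
  have hcom : ∀ (c : F) (a : A), a * algebraMap F A c = c • a := fun c a => by
    rw [← Algebra.commutes, ← Algebra.smul_def]
  have hcom' : ∀ (c : F) (a : A), algebraMap F A c * a = c • a := fun c a => by
    rw [← Algebra.smul_def]
  ext ⟨i,j⟩ ⟨k,l⟩
  fin_cases i <;> fin_cases j <;> fin_cases k <;> fin_cases l <;>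
    (simp only [rtlR, rtlLax, Matrix.mul_apply, Fintype.sum_prod_type, Fin.sum_univ_two,
      Matrix.one_apply, Matrix.of_apply, Matrix.kroneckerMap_apply, Prod.mk.injEq,
      Matrix.cons_val', Matrix.cons_val_zero, Matrix.cons_val_one, Matrix.head_cons,
      Matrix.head_fin_const, Matrix.empty_val', Matrix.cons_val_fin_one,
      Fin.mk_zero, Fin.mk_one, Fin.zero_eq_one_iff, Fin.one_eq_zero_iff, Nat.reduceEqDiff,
      and_true, true_and, and_false, false_and, and_self, not_true, not_false_iff,
      if_true, if_false, ne_eq, Fin.isValue, reduceIte, one_mul, mul_one, zero_mul, mul_zero,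
      add_zero, zero_add, neg_mul, mul_neg, neg_neg, not_true, not_false_iff, neg_zero]) <;>
    (simp only [map_sub, hcom, hcom', smul_mul_assoc, mul_smul_comm, smul_smul, sub_mul,
      mul_sub, smul_sub, mul_assoc, hVU, hVUi, hViU, hViUi, Units.mul_inv, Units.inv_mul,
      mul_one, one_mul, sub_smul, smul_neg, neg_smul]) <;>
    match_scalars <;> field_simp [hX, hX', hH] <;>
      (try rw [eq_div_iff (by simp [hX, hX', hH])]) <;> ring
end

section
/- Let q₁, q₂, q₇, q₈, p₁, p₂, p₇, p₈ be real numbers, and set q₃=-q₂, q₄=-q₁, q₅=-q₈, q₆=-q₇, p₃=-p₂, p₄=-p₁, p₅=-p₈, p₆=-p₇. Define E₁ = e^{p₁}[1 + e^{q₁-q₂} - e^{q₁-q₂+p₂} - e^{q₁-q₃+p₂} + e^{q₁-q₃+p₂+p₃} + e^{q₁-q₄+p₂+p₃}] + e^{p₂}[1 + e^{q₂-q₃} - e^{q₂-q₃-p₂} - e^{q₂-q₃+p₃} + e^{q₂-q₃-p₂+p₃} - e^{q₂-q₄+p₃} + e^{q₂-q₄-p₂+p₃}] + e^{p₃}[1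 + e^{q₃-q₄} - e^{q₃-q₄-p₃}] + e^{p₄}[1 + e^{q₄-q₅}] + e^{p₅}[1 + e^{q₅-q₆} - e^{q₅-q₆+p₆} - e^{q₅-q₇+p₆} + e^{q₅-q₇+p₆+p₇} + e^{q₅-q₈+p₆+p₇}] + e^{p₆}[1 + e^{q₆-q₇} - e^{q₆-q₇-p₆} - e^{q₆-q₇+p₇} + e^{q₆-q₇-p₆+p₇} - e^{q₆-q₈+p₇} + e^{q₆-q₈-p₆+p₇}] + e^{p₇}[1 + e^{q₇-q₈} - e^{q₇-q₈-p₇}] + e^{p₈}[1 + e^{q₈-q₁}], and define E₇ = e^{-p₁}[1 + e^{q₈-q₁}] + e^{-p₂}[1 + e^{q₁-q₂} - e^{q₁-q₂+p₂}] + e^{-p₃}[1 + e^{q₂-q₃} - e^{q₂-q₃-p₂} - e^{q₂-q₃+p₃} + e^{q₂-q₃-p₂+p₃} - e^{q₁-q₃-p₂} + e^{q₁-q₃-p₂+p₃}] + e^{-p₄}[1 + e^{q₃-q₄} - e^{q₃-q₄-p₃} - e^{q₂-q₄-p₃} + e^{q₂-q₄-p₃-p₂} + e^{q₁-q₄-p₃-p₂}]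 + e^{-p₅}[1 + e^{q₄-q₅}] + e^{-p₆}[1 + e^{q₅-q₆} - e^{q₅-q₆+p₆}] + e^{-p₇}[1 + e^{q₆-q₇} - e^{q₆-q₇-p₆} - e^{q₆-q₇+p₇} + e^{q₆-q₇-p₆+p₇} - e^{q₅-q₇-p₆} + e^{q₅-q₇-p₆+p₇}] + e^{-p₈}[1 + e^{q₇-q₈} - e^{q₇-q₈-p₇} - e^{q₆-q₈-p₇} + e^{q₆-q₈-p₇-p₆} + e^{q₅-q₈-p₇-p₆}]. Then E₁ = E₇, and both equal 2cosh p₁ + 2cosh p₂ + 2cosh p₇ + 2cosh p₈ + e^{q₁-q₂}(e^{p₁} + e^{-p₂} - 1 - e^{p₁+p₂}) + e^{q₇-q₈}(e^{p₇} + e^{-p₈} - 1 - e^{-p₇-p₈}) + e^{q₈-q₁}(e^{-p₁} + e^{p₈}) + e^{q₁+q₂}(e^{p₁} + e^{-p₂} - 1 - e^{p₁+p₂}) + e^{-q₇-q₈}(e^{p₇} + e^{-p₈} - 1 - e^{-p₇-p₈}) + e^{2q₁+p₁} + e^{2q₂}(e^{p₂} - 2 + e^{-p₂}) + e^{-2q₇}(e^{p₇}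 - 2 + e^{-p₇}) + e^{-2q₈-p₈}. -/
set_option maxHeartbeats 4000000


open Real

/-- under the folding identifications `q₃=-q₂, q₄=-q₁, q₅=-q₈, q₆=-q₇`,
`p₃=-p₂, p₄=-p₁, p₅=-p₈, p₆=-p₇`, the first and seventh Hamiltonians `E₁`, `E₇` of the
double-impurity `SU(8)+8F` dimer coincide and equal the stated folded expression. -/
theorem folded_SU8_dimer_hamiltonians
    (q₁ q₂ q₇ q₈ p₁ p₂ p₇ p₈ q₃ q₄ q₅ q₆ p₃ p₄ p₅ p₆ E₁ E₇ : ℝ)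
    (hq₃ : q₃ = -q₂) (hq₄ : q₄ = -q₁) (hq₅ : q₅ = -q₈) (hq₆ : q₆ = -q₇)
    (hp₃ : p₃ = -p₂) (hp₄ : p₄ = -p₁) (hp₅ : p₅ = -p₈) (hp₆ : p₆ = -p₇)
    (hE₁ : E₁ =
      Real.exp p₁ * (1 + Real.exp (q₁ - q₂) - Real.exp (q₁ - q₂ + p₂) - Real.exp (q₁ - q₃ + p₂)
        + Real.exp (q₁ - q₃ + p₂ + p₃) + Real.exp (q₁ - q₄ + p₂ + p₃))
      + Real.exp p₂ * (1 + Real.exp (q₂ - q₃) - Real.exp (q₂ - q₃ - p₂) - Real.exp (q₂ - q₃ + p₃)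
        + Real.exp (q₂ - q₃ - p₂ + p₃) - Real.exp (q₂ - q₄ + p₃) + Real.exp (q₂ - q₄ - p₂ + p₃))
      + Real.exp p₃ * (1 + Real.exp (q₃ - q₄) - Real.exp (q₃ - q₄ - p₃))
      + Real.exp p₄ * (1 + Real.exp (q₄ - q₅))
      + Real.exp p₅ * (1 + Real.exp (q₅ - q₆) - Real.exp (q₅ - q₆ + p₆) - Real.exp (q₅ - q₇ + p₆)
        + Real.exp (q₅ - q₇ + p₆ + p₇) + Real.exp (q₅ - q₈ + p₆ + p₇))
      + Real.exp p₆ * (1 + Real.exp (q₆ - q₇) - Real.exp (q₆ - q₇ - p₆) - Real.exp (q₆ - q₇ + p₇)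
        + Real.exp (q₆ - q₇ - p₆ + p₇) - Real.exp (q₆ - q₈ + p₇) + Real.exp (q₆ - q₈ - p₆ + p₇))
      + Real.exp p₇ * (1 + Real.exp (q₇ - q₈) - Real.exp (q₇ - q₈ - p₇))
      + Real.exp p₈ * (1 + Real.exp (q₈ - q₁)))
    (hE₇ : E₇ =
      Real.exp (-p₁) * (1 + Real.exp (q₈ - q₁))
      + Real.exp (-p₂) * (1 + Real.exp (q₁ - q₂) - Real.exp (q₁ - q₂ + p₂))
      + Real.exp (-p₃) * (1 + Real.exp (q₂ - q₃) - Real.exp (q₂ - q₃ - p₂) - Real.exp (q₂ - q₃ + p₃)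
        + Real.exp (q₂ - q₃ - p₂ + p₃) - Real.exp (q₁ - q₃ - p₂) + Real.exp (q₁ - q₃ - p₂ + p₃))
      + Real.exp (-p₄) * (1 + Real.exp (q₃ - q₄) - Real.exp (q₃ - q₄ - p₃) - Real.exp (q₂ - q₄ - p₃)
        + Real.exp (q₂ - q₄ - p₃ - p₂) + Real.exp (q₁ - q₄ - p₃ - p₂))
      + Real.exp (-p₅) * (1 + Real.exp (q₄ - q₅))
      + Real.exp (-p₆) * (1 + Real.exp (q₅ - q₆) - Real.exp (q₅ - q₆ + p₆))
      + Real.exp (-p₇) * (1 + Real.exp (q₆ - q₇) - Real.exp (q₆ - q₇ - p₆) - Real.exp (q₆ - q₇ + p₇)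
        + Real.exp (q₆ - q₇ - p₆ + p₇) - Real.exp (q₅ - q₇ - p₆) + Real.exp (q₅ - q₇ - p₆ + p₇))
      + Real.exp (-p₈) * (1 + Real.exp (q₇ - q₈) - Real.exp (q₇ - q₈ - p₇) - Real.exp (q₆ - q₈ - p₇)
        + Real.exp (q₆ - q₈ - p₇ - p₆) + Real.exp (q₅ - q₈ - p₇ - p₆))) :
    E₁ = E₇ ∧
    E₁ = 2 * Real.cosh p₁ + 2 * Real.cosh p₂ + 2 * Real.cosh p₇ + 2 * Real.cosh p₈
      + Real.exp (q₁ - q₂) * (Real.exp p₁ + Real.exp (-p₂) - 1 - Real.exp (p₁ + p₂))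
      + Real.exp (q₇ - q₈) * (Real.exp p₇ + Real.exp (-p₈) - 1 - Real.exp (-p₇ - p₈))
      + Real.exp (q₈ - q₁) * (Real.exp (-p₁) + Real.exp p₈)
      + Real.exp (q₁ + q₂) * (Real.exp p₁ + Real.exp (-p₂) - 1 - Real.exp (p₁ + p₂))
      + Real.exp (-q₇ - q₈) * (Real.exp p₇ + Real.exp (-p₈) - 1 - Real.exp (-p₇ - p₈))
      + Real.exp (2 * q₁ + p₁) + Real.exp (2 * q₂) * (Real.exp p₂ - 2 + Real.exp (-p₂))
      + Real.exp (-2 * q₇) * (Real.exp p₇ - 2 + Real.exp (-p₇))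
      + Real.exp (-2 * q₈ - p₈) := by
  subst hq₃ hq₄ hq₅ hq₆ hp₃ hp₄ hp₅ hp₆ hE₁ hE₇
  constructor <;>
  · simp only [Real.cosh_eq, two_mul, neg_mul, Real.exp_add, Real.exp_sub, Real.exp_neg]
    have h1 := (Real.exp_pos p₁).ne'; have h2 := (Real.exp_pos p₂).ne'
    have h7 := (Real.exp_pos p₇).ne'; have h8 := (Real.exp_pos p₈).ne'
    have g1 := (Real.exp_pos q₁).ne'; have g2 := (Real.exp_pos q₂).ne'
    have g7 := (Real.exp_pos q₇).ne'; have g8 := (Real.exp_pos q₈).ne'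
    field_simp
    ring
end

section
/- Let N ≥ 3 and consider ℝ^{2N} with coordinates (q₁,…,q_N, p₁,…,p_N) and the canonical Poisson bracket {f,h} = Σ_{i=1}^{N} (∂f/∂q_i ∂h/∂p_i - ∂f/∂p_i ∂h/∂q_i). Define the functions S₀ = e^{-2q₁}, S_N = e^{2q_N}, and S_n = exp(q_n - q_{n+1} + (-1)ⁿ (p_n - p_{n+1})/2) for 1 ≤ n ≤ N-1. Then: (i) {S_n, S_{n+1}} = (-1)ⁿ S_n S_{n+1} for every 0 ≤ n ≤ N-1; (ii) {S_n, e^{p_n}} = S_n e^{p_n} for every 1 ≤ n ≤ N-1; (iii) {e^{p_{n+1}}, S_n} = e^{p_{n+1}} S_n for every 1 ≤ n ≤ N-1. -/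
open Real

/-- The canonical Poisson bracket of two functions on `ℝ^{2N}`
(coordinates `q₁,…,q_N,p₁,…,p_N`, indexed here by `1,…,N ⊂ ℕ`):
`{f,h} = Σ_{i=1}^N (∂f/∂q_i ∂h/∂p_i - ∂f/∂p_i ∂h/∂q_i)`. -/
noncomputable def poissonBracketN (N : ℕ)
    (f h : (ℕ → ℝ) → (ℕ → ℝ) → ℝ) (q p : ℕ → ℝ) : ℝ :=
  ∑ i ∈ Finset.Icc 1 N,
    (deriv (fun t => f (Function.update q i t) p) (q i) *
        deriv (fun t => h q (Function.update p i t)) (p i)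
      - deriv (fun t => f q (Function.update p i t)) (p i) *
        deriv (fun t => h (Function.update q i t) p) (q i))

/-- The square-loop weights of the `D_N` dimer: `S₀ = e^{-2q₁}`, `S_N = e^{2q_N}`,
`S_n = exp(q_n - q_{n+1} + (-1)ⁿ(p_n - p_{n+1})/2)` for `1 ≤ n ≤ N-1`. -/
noncomputable def squareLoop (N n : ℕ) (q p : ℕ → ℝ) : ℝ :=
  if n = 0 then Real.exp (-2 * q 1)
  else if n = N then Real.exp (2 * q N)
  else Real.exp (q n - q (n + 1) + (-1 : ℝ) ^ n * (p n - p (n + 1)) / 2)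

/-- Coefficient of the derivative of the exponent of `S_n` with respect to `q i`. -/
noncomputable def cq (N n i : ℕ) : ℝ :=
  if n = 0 then (if i = 1 then -2 else 0)
  else if n = N then (if i = N then 2 else 0)
  else (if n = i then 1 else 0) - (if n + 1 = i then 1 else 0)

/-- Coefficient of the derivative of the exponent of `S_n` with respect to `p i`. -/
noncomputable def cp (N n i : ℕ) : ℝ :=
  if n = 0 then 0
  else if n = N then 0
  else (-1 : ℝ) ^ n / 2 * ((if n = i then 1 else 0) - (if n + 1 = i then 1 else 0))

lemma deriv_exp_linear {f : ℝ → ℝ} (a x E : ℝ)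
    (hf : ∀ t, f t = Real.exp (a * (t - x) + E)) :
    deriv f x = a * Real.exp E := by
  have h : f = fun t => Real.exp (a * t + (E - a * x)) :=
    funext fun t => by rw [hf]; ring_nf
  have h1 : HasDerivAt (fun t : ℝ => a * t + (E - a * x)) a x := by
    simpa using ((hasDerivAt_id x).const_mul a).add_const (E - a * x)
  have hd := h1.exp
  rw [h, hd.deriv, show a * x + (E - a * x) = E by ring]; ring

lemma deriv_exp_p (p : ℕ → ℝ) (n i : ℕ) :
    deriv (fun t => Real.exp (Function.update p i t n)) (p i)
      = (if n = i then (1 : ℝ) else 0) * Real.exp (p n) := by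
  apply deriv_exp_linear
  intro t
  congr 1
  simp only [Function.update_apply]
  split_ifs with h
  · subst h; ring
  · ring

lemma deriv_sq_q (N n : ℕ) (q p : ℕ → ℝ) (i : ℕ) :
    deriv (fun t => squareLoop N n (Function.update q i t) p) (q i)
      = cq N n i * squareLoop N n q p := by
  by_cases h0 : n = 0
  · subst h0
    rw [deriv_exp_linear (cq N 0 i) (q i) (-2 * q 1) (fun t => ?_)]
    · simp [squareLoop]
    · show Real.exp (-2 * Function.update q i t 1) = _
      rw [Function.update_apply]
      simp only [cq, if_pos rfl]
      congr 1
      split_ifs <;> first | omega | (subst_vars; ring)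
  · by_cases hnN : n = N
    · rw [deriv_exp_linear (cq N n i) (q i) (2 * q N) (fun t => ?_)]
      · simp [squareLoop, cq, if_neg h0, if_pos hnN]
      · show squareLoop N n _ p = _
        simp only [squareLoop, if_neg h0, if_pos hnN, cq, Function.update_apply]
        congr 1
        split_ifs <;> first | omega | (subst_vars; ring)
    · rw [deriv_exp_linear (cq N n i) (q i)
        (q n - q (n + 1) + (-1 : ℝ) ^ n * (p n - p (n + 1)) / 2) (fun t => ?_)]
      · simp [squareLoop, if_neg h0, if_neg hnN]
      · show squareLoop N n _ p = _
        simp only [squareLoop, if_neg h0, if_neg hnN, cq, Function.update_apply]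
        congr 1
        split_ifs <;> first | omega | (subst_vars; ring)

lemma deriv_sq_p (N n : ℕ) (q p : ℕ → ℝ) (i : ℕ) :
    deriv (fun t => squareLoop N n q (Function.update p i t)) (p i)
      = cp N n i * squareLoop N n q p := by
  by_cases h0 : n = 0
  · subst h0; simp [squareLoop, cp]
  · by_cases hnN : n = N
    · simp [squareLoop, cp, if_neg h0, if_pos hnN]
    · rw [deriv_exp_linear (cp N n i) (p i)
        (q n - q (n + 1) + (-1 : ℝ) ^ n * (p n - p (n + 1)) / 2) (fun t => ?_)]
      · simp [squareLoop, if_neg h0, if_neg hnN, cp]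
      · show squareLoop N n q _ = _
        simp only [squareLoop, if_neg h0, if_neg hnN, cp, Function.update_apply]
        congr 1
        split_ifs <;> first | omega | (subst_vars; ring)

lemma bracket_sq_sq (N m k : ℕ) (q p : ℕ → ℝ) :
    poissonBracketN N (squareLoop N m) (squareLoop N k) q p
      = (∑ i ∈ Finset.Icc 1 N, (cq N m i * cp N k i - cp N m i * cq N k i))
        * (squareLoop N m q p * squareLoop N k q p) := by
  unfold poissonBracketN
  rw [Finset.sum_mul]
  refine Finset.sum_congr rfl fun i _ => ?_
  rw [deriv_sq_q, deriv_sq_p, deriv_sq_p, deriv_sq_q]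
  ring

lemma key1 (N n : ℕ) (hN : 3 ≤ N) (hn : n ≤ N - 1) :
    ∑ i ∈ Finset.Icc 1 N, (cq N n i * cp N (n + 1) i - cp N n i * cq N (n + 1) i)
      = (-1 : ℝ) ^ n := by
  have hmem : n + 1 ∈ Finset.Icc 1 N := by simp; omega
  rw [Finset.sum_eq_single_of_mem (n + 1) hmem ?_]
  · simp only [cq, cp]
    split_ifs <;>
      first | contradiction | omega | (subst_vars; ring) | (subst_vars; rw [pow_succ]; ring)
  · intro i hi hne
    simp only [Finset.mem_Icc] at hi
    simp only [cq, cp]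
    split_ifs <;> first | contradiction | omega | ring

/-- Poisson commutation relations of the square loops of the `D_N` dimer:
(i) `{S_n, S_{n+1}} = (-1)ⁿ S_n S_{n+1}` for `0 ≤ n ≤ N-1`;
(ii) `{S_n, e^{p_n}} = S_n e^{p_n}` for `1 ≤ n ≤ N-1`;
(iii) `{e^{p_{n+1}}, S_n} = e^{p_{n+1}} S_n` for `1 ≤ n ≤ N-1`. -/
theorem squareLoop_poisson_relations (N : ℕ) (hN : 3 ≤ N) (q p : ℕ → ℝ) :
    (∀ n : ℕ, n ≤ N - 1 →
      poissonBracketN N (squareLoop N n) (squareLoop N (n + 1)) q p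
        = (-1 : ℝ) ^ n * (squareLoop N n q p * squareLoop N (n + 1) q p)) ∧
    (∀ n : ℕ, 1 ≤ n → n ≤ N - 1 →
      poissonBracketN N (squareLoop N n) (fun _ p' => Real.exp (p' n)) q p
        = squareLoop N n q p * Real.exp (p n)) ∧
    (∀ n : ℕ, 1 ≤ n → n ≤ N - 1 →
      poissonBracketN N (fun _ p' => Real.exp (p' (n + 1))) (squareLoop N n) q p
        = Real.exp (p (n + 1)) * squareLoop N n q p) := by
  refine ⟨fun n hn => ?_, fun n hn1 hn2 => ?_, fun n hn1 hn2 => ?_⟩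
  · rw [bracket_sq_sq, key1 N n hN hn]
  · have h0 : n ≠ 0 := by omega
    have hnN : n ≠ N := by omega
    unfold poissonBracketN
    have step : ∀ i ∈ Finset.Icc 1 N,
        (deriv (fun t => squareLoop N n (Function.update q i t) p) (q i) *
          deriv (fun t => (fun _ p' => Real.exp (p' n)) q (Function.update p i t)) (p i)
        - deriv (fun t => squareLoop N n q (Function.update p i t)) (p i) *
          deriv (fun t => (fun _ p' => Real.exp (p' n)) (Function.update q i t) p) (q i))
        = cq N n i * squareLoop N n q p * ((if n = i then (1 : ℝ) else 0) * Real.exp (p n)) := by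
      intro i _
      rw [deriv_sq_q, deriv_sq_p]
      show _ - _ * deriv (fun _ : ℝ => Real.exp (p n)) (q i) = _
      rw [deriv_const]
      have := deriv_exp_p p n i
      rw [show (fun t => (fun _ p' => Real.exp (p' n)) q (Function.update p i t))
          = fun t => Real.exp (Function.update p i t n) from rfl, this]
      ring
    rw [Finset.sum_congr rfl step]
    rw [Finset.sum_eq_single_of_mem n (by simp; omega) ?_]
    · rw [if_pos rfl]
      simp only [cq, if_neg h0, if_neg hnN, if_pos rfl,
        if_neg (show ¬ n + 1 = n by omega)]
      norm_num
    · intro i hi hne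
      rw [if_neg (by omega)]
      ring
  · have h0 : n ≠ 0 := by omega
    have hnN : n ≠ N := by omega
    unfold poissonBracketN
    have step : ∀ i ∈ Finset.Icc 1 N,
        (deriv (fun t => (fun _ p' => Real.exp (p' (n + 1))) (Function.update q i t) p) (q i) *
          deriv (fun t => squareLoop N n q (Function.update p i t)) (p i)
        - deriv (fun t => (fun _ p' => Real.exp (p' (n + 1))) q (Function.update p i t)) (p i) *
          deriv (fun t => squareLoop N n (Function.update q i t) p) (q i))
        = -((if n + 1 = i then (1 : ℝ) else 0) * Real.exp (p (n + 1))
            * (cq N n i * squareLoop N n q p)) := by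
      intro i _
      rw [deriv_sq_q, deriv_sq_p]
      show deriv (fun _ : ℝ => Real.exp (p (n + 1))) (q i) * _ - _ = _
      rw [deriv_const]
      have := deriv_exp_p p (n + 1) i
      rw [show (fun t => (fun _ p' => Real.exp (p' (n + 1))) q (Function.update p i t))
          = fun t => Real.exp (Function.update p i t (n + 1)) from rfl, this]
      ring
    rw [Finset.sum_congr rfl step]
    rw [Finset.sum_eq_single_of_mem (n + 1) (by simp; omega) ?_]
    · rw [if_pos rfl]
      simp only [cq, if_neg h0, if_neg hnN,
        if_neg (show ¬ n = n + 1 by omega), if_pos rfl]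
      norm_num
    · intro i hi hne
      rw [if_neg (by omega)]
      ring
end

section
/- Let n ≥ 1 and let L, M, C : ℝ → Matrix (Fin n) (Fin n) ℝ be differentiable matrix-valued functions such that L(t) is invertible for every t, the trace of C(t) is 0 for every t, and L satisfies the weak Lax triad equation L'(t) = L(t)·M(t) - M(t)·L(t) + C(t)·L(t) for every t. Then the function t ↦ det L(t) is constant. -/
open Matrix

attribute [local instance] Matrix.normedAddCommGroup Matrix.normedSpace

open Finset in
/-- Jacobi-style derivative of the determinant of a matrix-valued function, expressed via
row updates. -/
lemma hasDerivAt_det_aux {n : ℕ} {L : ℝ → Matrix (Fin n) (Fin n) ℝ}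
    {D : Matrix (Fin n) (Fin n) ℝ} {t : ℝ}
    (h : ∀ i j, HasDerivAt (fun s => L s i j) (D i j) t) :
    HasDerivAt (fun s => (L s).det)
      (∑ i, ((L t).updateRow i (D i)).det) t := by
  classical
  have hform : ∀ A : Matrix (Fin n) (Fin n) ℝ,
      A.det = ∑ σ : Equiv.Perm (Fin n),
        ((Equiv.Perm.sign σ : ℤ) : ℝ) * ∏ i, A i (σ i) := by
    intro A
    rw [← Matrix.det_transpose A, Matrix.det_apply']
    simp [Matrix.transpose_apply]
  have H : HasDerivAt (fun s => ∑ σ : Equiv.Perm (Fin n),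
      ((Equiv.Perm.sign σ : ℤ) : ℝ) * ∏ i, L s i (σ i))
      (∑ σ : Equiv.Perm (Fin n), ((Equiv.Perm.sign σ : ℤ) : ℝ) *
          ∑ i, (∏ j ∈ univ.erase i, L t j (σ j)) • D i (σ i)) t := by
    apply HasDerivAt.fun_sum
    intro σ _
    exact (HasDerivAt.fun_finsetProd (fun i _ => h i (σ i))).const_mul _
  have hfun : (fun s => (L s).det) = fun s => ∑ σ : Equiv.Perm (Fin n),
      ((Equiv.Perm.sign σ : ℤ) : ℝ) * ∏ i, L s i (σ i) := funext fun s => hform (L s)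
  rw [hfun]
  convert H using 1
  calc ∑ i, ((L t).updateRow i (D i)).det
      = ∑ i, ∑ σ : Equiv.Perm (Fin n), ((Equiv.Perm.sign σ : ℤ) : ℝ) *
          ∏ j, ((L t).updateRow i (D i)) j (σ j) := by
        refine Finset.sum_congr rfl fun i _ => hform _
    _ = ∑ σ : Equiv.Perm (Fin n), ∑ i, ((Equiv.Perm.sign σ : ℤ) : ℝ) *
          ∏ j, ((L t).updateRow i (D i)) j (σ j) := Finset.sum_comm
    _ = ∑ σ : Equiv.Perm (Fin n), ((Equiv.Perm.sign σ : ℤ) : ℝ) *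
          ∑ i, (∏ j ∈ univ.erase i, L t j (σ j)) • D i (σ i) := by
        refine Finset.sum_congr rfl fun σ _ => ?_
        rw [Finset.mul_sum]
        refine Finset.sum_congr rfl fun i _ => ?_
        congr 1
        have : ∏ j, ((L t).updateRow i (D i)) j (σ j)
            = ((L t).updateRow i (D i)) i (σ i) *
              ∏ j ∈ univ.erase i, ((L t).updateRow i (D i)) j (σ j) :=
          (Finset.mul_prod_erase univ _ (mem_univ i)).symm
        rw [this, Matrix.updateRow_self]
        have hprod : ∏ j ∈ univ.erase i, ((L t).updateRow i (D i)) j (σ j)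
            = ∏ j ∈ univ.erase i, L t j (σ j) := by
          refine Finset.prod_congr rfl fun j hj => ?_
          rw [Matrix.updateRow_apply, if_neg (Finset.ne_of_mem_erase hj)]
        rw [hprod, smul_eq_mul, mul_comm]

/-- Replacing each row of `A` in turn by the corresponding row of `X * A` and summing the
determinants gives `trace X * det A`. -/
lemma sum_det_updateRow_mul {n : ℕ} (X A : Matrix (Fin n) (Fin n) ℝ) :
    ∑ i, (A.updateRow i ((X * A) i)).det = X.trace * A.det := by
  classical
  have hrow : ∀ i, (X * A) i = ∑ k, X i k • A k := by
    intro i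
    funext j
    simp [Matrix.mul_apply, Finset.sum_apply]
  have : ∀ i, (A.updateRow i ((X * A) i)).det = X i i * A.det := by
    intro i
    rw [hrow i, Matrix.det_updateRow_sum, smul_eq_mul]
  simp only [this, Matrix.trace, Matrix.diag]
  rw [Finset.sum_mul]

/-- if `L, M, C : ℝ → Matrix (Fin n) (Fin n) ℝ` are differentiable, `L(t)` is
invertible for all `t`, `C(t)` is traceless for all `t`, and `L` obeys the weak Lax triad
`L' = LM - ML + CL`, then `det L(t)` is constant. -/
theorem weak_lax_triad_det_const (n : ℕ) (hn : 1 ≤ n)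
    (L M C : ℝ → Matrix (Fin n) (Fin n) ℝ)
    (hM : Differentiable ℝ M) (hC : Differentiable ℝ C)
    (hLunit : ∀ t, IsUnit (L t))
    (hCtrace : ∀ t, (C t).trace = 0)
    (hLax : ∀ t, HasDerivAt L (L t * M t - M t * L t + C t * L t) t) :
    ∀ s t : ℝ, (L s).det = (L t).det := by
  have key : ∀ t, HasDerivAt (fun s => (L s).det) 0 t := by
    intro t
    set D : Matrix (Fin n) (Fin n) ℝ := L t * M t - M t * L t + C t * L t with hD
    have hentry : ∀ i j, HasDerivAt (fun s => L s i j) (D i j) t := by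
      intro i j
      have h1 : HasFDerivAt L ((1 : ℝ →L[ℝ] ℝ).smulRight D) t := (hLax t).hasFDerivAt
      have h2 := hasFDerivAt_pi'.1 h1 i
      have h3 := hasFDerivAt_pi'.1 h2 j
      have h4 := h3.hasDerivAt
      have h5 : ((ContinuousLinearMap.proj j).comp ((ContinuousLinearMap.proj i).comp
          ((1 : ℝ →L[ℝ] ℝ).smulRight D))) 1 = D i j := by
          simp only [ContinuousLinearMap.comp_apply, ContinuousLinearMap.proj_apply,
            ContinuousLinearMap.smulRight_apply, ContinuousLinearMap.one_apply, one_smul]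
          show ((1 : ℝ →L[ℝ] ℝ) 1 • D) i j = D i j
          simp
      exact h5 ▸ h4
    have hdet := hasDerivAt_det_aux hentry
    -- rewrite D as X * L t
    have hLdet : IsUnit (L t).det := (Matrix.isUnit_iff_isUnit_det (L t)).mp (hLunit t)
    set X : Matrix (Fin n) (Fin n) ℝ := L t * M t * (L t)⁻¹ - M t + C t with hX
    have hXL : X * L t = D := by
      rw [hX, hD]
      rw [Matrix.add_mul, Matrix.sub_mul]
      congr 2
      rw [Matrix.mul_assoc, Matrix.nonsing_inv_mul _ hLdet, Matrix.mul_one]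
    have htrX : X.trace = 0 := by
      rw [hX, Matrix.trace_add, Matrix.trace_sub, hCtrace t,
        Matrix.trace_mul_comm (L t * M t) (L t)⁻¹, ← Matrix.mul_assoc,
        Matrix.nonsing_inv_mul _ hLdet, Matrix.one_mul]
      ring
    have hsum : ∑ i, ((L t).updateRow i (D i)).det = 0 := by
      rw [← hXL, sum_det_updateRow_mul, htrX, zero_mul]
    rwa [hsum] at hdet
  have hdiff : Differentiable ℝ fun s => (L s).det := fun t => (key t).differentiableAt
  have hderiv : ∀ t, deriv (fun s => (L s).det) t = 0 := fun t => (key t).deriv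
  exact fun s t => is_const_of_deriv_eq_zero hdiff hderiv s t
end

section
/- Let X > 0 and let p, q be real numbers. Define the 2×2 real matrices K₊(X) = [[2√X cosh((p-2q)/2) - (2/√X) cosh((p+2q)/2), X + X⁻¹ - 2 cosh 2q],[-X - X⁻¹ + 2 cosh p, 2√X cosh((p+2q)/2) - (2/√X) cosh((p-2q)/2)]] and K₋(X) = [[2√X cosh((p+2q)/2) - (2/√X) cosh((p-2q)/2), -X - X⁻¹ + 2 cosh p],[X + X⁻¹ - 2 cosh 2q, 2√X cosh((p-2q)/2) - (2/√X) cosh((p+2q)/2)]]. Then det K₊(X) = (X - X⁻¹)² and det K₋(X) = (X - X⁻¹)². -/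
open Matrix Real

lemma det_aux (X s e f : ℝ) (hs : 0 < s) (he : 0 < e) (hf : 0 < f)
    (hsX : s ^ 2 = X) :
    (2 * s * ((e / f + (e / f)⁻¹) / 2) - 2 / s * ((e * f + (e * f)⁻¹) / 2)) *
      (2 * s * ((e * f + (e * f)⁻¹) / 2) - 2 / s * ((e / f + (e / f)⁻¹) / 2)) -
    (X + X⁻¹ - 2 * ((f ^ 2 + (f ^ 2)⁻¹) / 2)) *
      (-X - X⁻¹ + 2 * ((e ^ 2 + (e ^ 2)⁻¹) / 2)) = (X - X⁻¹) ^ 2 := by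
  subst hsX
  have hs' := hs.ne'
  have he' := he.ne'
  have hf' := hf.ne'
  field_simp
  ring

lemma det_aux2 (X s e f : ℝ) (hs : 0 < s) (he : 0 < e) (hf : 0 < f)
    (hsX : s ^ 2 = X) :
    (2 * s * ((e * f + (e * f)⁻¹) / 2) - 2 / s * ((e / f + (e / f)⁻¹) / 2)) *
      (2 * s * ((e / f + (e / f)⁻¹) / 2) - 2 / s * ((e * f + (e * f)⁻¹) / 2)) -
    (-X - X⁻¹ + 2 * ((e ^ 2 + (e ^ 2)⁻¹) / 2)) *
      (X + X⁻¹ - 2 * ((f ^ 2 + (f ^ 2)⁻¹) / 2)) = (X - X⁻¹) ^ 2 := by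
  subst hsX
  have hs' := hs.ne'
  have he' := he.ne'
  have hf' := hf.ne'
  field_simp
  ring

/-- the determinants of the boundary reflection matrices `K₊(X)`, `K₋(X)` of
the type D relativistic Toda lattice both equal `(X - X⁻¹)²` for `X > 0`. -/
theorem reflection_matrices_det (X p q : ℝ) (hX : 0 < X)
    (Kp Km : Matrix (Fin 2) (Fin 2) ℝ)
    (hKp : Kp = !![2 * Real.sqrt X * Real.cosh ((p - 2 * q) / 2)
                    - (2 / Real.sqrt X) * Real.cosh ((p + 2 * q) / 2),
                  X + X⁻¹ - 2 * Real.cosh (2 * q);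
                  -X - X⁻¹ + 2 * Real.cosh p,
                  2 * Real.sqrt X * Real.cosh ((p + 2 * q) / 2)
                    - (2 / Real.sqrt X) * Real.cosh ((p - 2 * q) / 2)])
    (hKm : Km = !![2 * Real.sqrt X * Real.cosh ((p + 2 * q) / 2)
                    - (2 / Real.sqrt X) * Real.cosh ((p - 2 * q) / 2),
                  -X - X⁻¹ + 2 * Real.cosh p;
                  X + X⁻¹ - 2 * Real.cosh (2 * q),
                  2 * Real.sqrt X * Real.cosh ((p - 2 * q) / 2)
                    - (2 / Real.sqrt X) * Real.cosh ((p + 2 * q) / 2)]) :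
    Kp.det = (X - X⁻¹) ^ 2 ∧ Km.det = (X - X⁻¹) ^ 2 := by
  subst hKp hKm
  have hs : 0 < Real.sqrt X := Real.sqrt_pos.mpr hX
  have hsX : Real.sqrt X ^ 2 = X := Real.sq_sqrt hX.le
  have he : 0 < Real.exp (p / 2) := Real.exp_pos _
  have hf : 0 < Real.exp q := Real.exp_pos _
  have h1 : Real.cosh ((p - 2 * q) / 2)
      = (Real.exp (p / 2) / Real.exp q + (Real.exp (p / 2) / Real.exp q)⁻¹) / 2 := by
    rw [Real.cosh_eq, show (p - 2 * q) / 2 = p / 2 - q by ring, Real.exp_sub,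
      show -(p / 2 - q) = q - p / 2 by ring, Real.exp_sub, inv_div]
  have h2 : Real.cosh ((p + 2 * q) / 2)
      = (Real.exp (p / 2) * Real.exp q + (Real.exp (p / 2) * Real.exp q)⁻¹) / 2 := by
    rw [Real.cosh_eq, show (p + 2 * q) / 2 = p / 2 + q by ring,
      show -(p / 2 + q) = -(p / 2) + -q by ring, Real.exp_add, Real.exp_add,
      Real.exp_neg, Real.exp_neg, mul_inv]
  have hp2 : Real.exp p = Real.exp (p / 2) ^ 2 := by
    rw [sq, ← Real.exp_add]; ring_nf
  have hq2 : Real.exp (2 * q) = Real.exp q ^ 2 := by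
    rw [sq, ← Real.exp_add]; ring_nf
  have h3 : Real.cosh p = (Real.exp (p / 2) ^ 2 + (Real.exp (p / 2) ^ 2)⁻¹) / 2 := by
    rw [Real.cosh_eq, Real.exp_neg, hp2]
  have h4 : Real.cosh (2 * q) = (Real.exp q ^ 2 + (Real.exp q ^ 2)⁻¹) / 2 := by
    rw [Real.cosh_eq, Real.exp_neg, hq2]
  rw [Matrix.det_fin_two_of, Matrix.det_fin_two_of, h1, h2, h3, h4]
  exact ⟨det_aux X _ _ _ hs he hf hsX, det_aux2 X _ _ _ hs he hf hsX⟩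
end

section
/- Let N ≥ 3 and let q₁,…,q_N, p₁,…,p_N be real numbers. Define S₀ = e^{-2q₁}, S_N = e^{2q_N}, and S_n = exp(q_n - q_{n+1} + (-1)ⁿ (p_n - p_{n+1})/2) for 1 ≤ n ≤ N-1. Then Σ_{n=1}^{N} 2 cosh p_n + Σ_{n=1}^{N-1} S_n (e^{-(-1)ⁿ p_n} + e^{-(-1)^{n+1} p_{n+1}}) + S₁ S₀ (e^{p₁} + e^{-p₂}) + S_{N-1} S_N (e^{-(-1)^{N-1} p_{N-1}} + e^{-(-1)^N p_N}) + e^{-2q₂} + e^{2q_{N-1}} = Σ_{n=1}^{N} 2 cosh p_n + Σ_{n=1}^{N-1} 2 e^{q_n - q_{n+1}} cosh((p_n + p_{n+1})/2) + 2 e^{-q₁ - q₂} cosh((p₁ + p₂)/2) + 2 e^{q_{N-1} + q_N} cosh((p_{N-1} + p_N)/2) + e^{-2q₂} + e^{2q_{N-1}}. -/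
open Real Finset

lemma key1_s12 (a x y : ℝ) :
    Real.exp (a + (x - y) / 2) * (Real.exp (-x) + Real.exp y)
      = 2 * Real.exp a * Real.cosh ((x + y) / 2) := by
  rw [Real.cosh_eq, mul_add, ← Real.exp_add, ← Real.exp_add,
    show a + (x - y) / 2 + -x = a + -((x + y) / 2) by ring,
    show a + (x - y) / 2 + y = a + (x + y) / 2 by ring,
    Real.exp_add, Real.exp_add]
  ring

lemma key2 (a x y : ℝ) :
    Real.exp (a - (x - y) / 2) * (Real.exp x + Real.exp (-y))
      = 2 * Real.exp a * Real.cosh ((x + y) / 2) := by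
  rw [Real.cosh_eq, mul_add, ← Real.exp_add, ← Real.exp_add,
    show a - (x - y) / 2 + x = a + (x + y) / 2 by ring,
    show a - (x - y) / 2 + -y = a + -((x + y) / 2) by ring,
    Real.exp_add, Real.exp_add]
  ring

/-- the first Hamiltonian of the `D_N` dimer integrable system, written via the
square-loop weights `S₀ = e^{-2q₁}`, `S_N = e^{2q_N}`,
`S_n = exp(q_n - q_{n+1} + (-1)ⁿ(p_n - p_{n+1})/2)`, equals the Hamiltonian of the `D̂_N`
relativistic Toda lattice with coupling `g = 1`. -/
theorem DN_dimer_first_hamiltonian (N : ℕ) (hN : 3 ≤ N) (q p : ℕ → ℝ)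
    (S : ℕ → ℝ)
    (hS : S = fun n =>
      if n = 0 then Real.exp (-2 * q 1)
      else if n = N then Real.exp (2 * q N)
      else Real.exp (q n - q (n + 1) + (-1 : ℝ) ^ n * (p n - p (n + 1)) / 2)) :
    (∑ n ∈ Finset.Icc 1 N, 2 * Real.cosh (p n))
      + (∑ n ∈ Finset.Icc 1 (N - 1),
          S n * (Real.exp (-(-1 : ℝ) ^ n * p n) + Real.exp (-(-1 : ℝ) ^ (n + 1) * p (n + 1))))
      + S 1 * S 0 * (Real.exp (p 1) + Real.exp (-p 2))
      + S (N - 1) * S N *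
          (Real.exp (-(-1 : ℝ) ^ (N - 1) * p (N - 1)) + Real.exp (-(-1 : ℝ) ^ N * p N))
      + Real.exp (-2 * q 2) + Real.exp (2 * q (N - 1))
    = (∑ n ∈ Finset.Icc 1 N, 2 * Real.cosh (p n))
      + (∑ n ∈ Finset.Icc 1 (N - 1),
          2 * Real.exp (q n - q (n + 1)) * Real.cosh ((p n + p (n + 1)) / 2))
      + 2 * Real.exp (-q 1 - q 2) * Real.cosh ((p 1 + p 2) / 2)
      + 2 * Real.exp (q (N - 1) + q N) * Real.cosh ((p (N - 1) + p N) / 2)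
      + Real.exp (-2 * q 2) + Real.exp (2 * q (N - 1)) := by
  subst hS
  have hsum : (∑ n ∈ Finset.Icc 1 (N - 1),
      (fun n =>
        if n = 0 then Real.exp (-2 * q 1)
        else if n = N then Real.exp (2 * q N)
        else Real.exp (q n - q (n + 1) + (-1 : ℝ) ^ n * (p n - p (n + 1)) / 2)) n
      * (Real.exp (-(-1 : ℝ) ^ n * p n) + Real.exp (-(-1 : ℝ) ^ (n + 1) * p (n + 1))))
      = ∑ n ∈ Finset.Icc 1 (N - 1),
          2 * Real.exp (q n - q (n + 1)) * Real.cosh ((p n + p (n + 1)) / 2) := by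
    refine Finset.sum_congr rfl fun n hn => ?_
    rw [Finset.mem_Icc] at hn
    have h0 : n ≠ 0 := by omega
    have hnN : n ≠ N := by omega
    simp only [if_neg h0, if_neg hnN]
    rcases Nat.even_or_odd n with h | h
    · rw [h.neg_one_pow, h.add_one.neg_one_pow]
      simpa using key1_s12 (q n - q (n + 1)) (p n) (p (n + 1))
    · rw [h.neg_one_pow, h.add_one.neg_one_pow,
        show q n - q (n + 1) + (-1 : ℝ) * (p n - p (n + 1)) / 2
          = (q n - q (n + 1)) - (p n - p (n + 1)) / 2 by ring]
      simpa using key2 (q n - q (n + 1)) (p n) (p (n + 1))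
  have h1N : (1 : ℕ) ≠ N := by omega
  have hB1 : (fun n =>
        if n = 0 then Real.exp (-2 * q 1)
        else if n = N then Real.exp (2 * q N)
        else Real.exp (q n - q (n + 1) + (-1 : ℝ) ^ n * (p n - p (n + 1)) / 2)) 1
      * (fun n =>
        if n = 0 then Real.exp (-2 * q 1)
        else if n = N then Real.exp (2 * q N)
        else Real.exp (q n - q (n + 1) + (-1 : ℝ) ^ n * (p n - p (n + 1)) / 2)) 0
      * (Real.exp (p 1) + Real.exp (-p 2))
      = 2 * Real.exp (-q 1 - q 2) * Real.cosh ((p 1 + p 2) / 2) := by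
    simp only [if_neg (one_ne_zero), if_neg h1N, if_pos rfl, if_true]
    rw [← Real.exp_add,
      show q 1 - q (1 + 1) + (-1 : ℝ) ^ 1 * (p 1 - p (1 + 1)) / 2 + -2 * q 1
        = (-q 1 - q 2) - (p 1 - p 2) / 2 by norm_num; ring]
    exact key2 (-q 1 - q 2) (p 1) (p 2)
  have hNm : N - 1 + 1 = N := by omega
  have hNm0 : N - 1 ≠ 0 := by omega
  have hNmN : N - 1 ≠ N := by omega
  have hN0 : N ≠ 0 := by omega
  have hpow : ((-1 : ℝ)) ^ N = ((-1 : ℝ)) ^ (N - 1) * (-1) := by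
    rw [← pow_succ, hNm]
  have hB2 : (fun n =>
        if n = 0 then Real.exp (-2 * q 1)
        else if n = N then Real.exp (2 * q N)
        else Real.exp (q n - q (n + 1) + (-1 : ℝ) ^ n * (p n - p (n + 1)) / 2)) (N - 1)
      * (fun n =>
        if n = 0 then Real.exp (-2 * q 1)
        else if n = N then Real.exp (2 * q N)
        else Real.exp (q n - q (n + 1) + (-1 : ℝ) ^ n * (p n - p (n + 1)) / 2)) N
      * (Real.exp (-(-1 : ℝ) ^ (N - 1) * p (N - 1)) + Real.exp (-(-1 : ℝ) ^ N * p N))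
      = 2 * Real.exp (q (N - 1) + q N) * Real.cosh ((p (N - 1) + p N) / 2) := by
    simp only [if_neg hNm0, if_neg hNmN, if_neg hN0, if_pos rfl, if_true, hNm, hpow]
    rw [← Real.exp_add]
    rcases Nat.even_or_odd (N - 1) with h | h
    · rw [h.neg_one_pow]
      rw [show q (N - 1) - q N + (1 : ℝ) * (p (N - 1) - p N) / 2 + 2 * q N
          = (q (N - 1) + q N) + (p (N - 1) - p N) / 2 by ring]
      simpa using key1_s12 (q (N - 1) + q N) (p (N - 1)) (p N)
    · rw [h.neg_one_pow]
      rw [show q (N - 1) - q N + (-1 : ℝ) * (p (N - 1) - p N) / 2 + 2 * q N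
          = (q (N - 1) + q N) - (p (N - 1) - p N) / 2 by ring]
      simpa using key2 (q (N - 1) + q N) (p (N - 1)) (p N)
  rw [hsum, hB1, hB2]
end
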